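/- There exists ε ∈ (0, 1) such that for all real M > 0 and Q with |Q| ≤ εM, and for every r with r₊(M,Q) ≤ r ≤ r_P(M,Q), one has 6r⁴ − 30Mr³ + (32M² + 40Q²)r² − 90MQ²r + 42Q⁴ ≤ 0. Equivalently, on that interval 2(r² − 3Mr + 2Q²)/r⁵ − (1/2)·d/dr( Υ(r)·V₁(r) ) ≤ 0. -/

import Mathlib

noncomputable section

/-- The Reissner–Nordström lapse function `Υ(r) = 1 - 2M/r + Q²/r²`. -/
def Upsilon (M Q r : ℝ) : ℝ := 1 - 2*M/r + Q^2/r^2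

/-- The event horizon radius `r₊ = M + √(M² - Q²)`. -/
def rplus (M Q : ℝ) : ℝ := M + Real.sqrt (M^2 - Q^2)

/-- The photon-sphere radius `r_P = (3M + √(9M² - 8Q²))/2`. -/
def rP (M Q : ℝ) : ℝ := (3*M + Real.sqrt (9*M^2 - 8*Q^2)) / 2

/-- The Regge–Wheeler potential `V₁(r) = r⁻²(4 - 8M/r + 14Q²/r²)`. -/
def V1 (M Q r : ℝ) : ℝ := (1 / r^2) * (4 - 8*M/r + 14*Q^2/r^2)

theorem quartic_V1_nonpos_small_charge :
    ∃ ε : ℝ, 0 < ε ∧ ε < 1 ∧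
      ∀ M Q : ℝ, 0 < M → |Q| ≤ ε * M →
        ∀ r : ℝ, rplus M Q ≤ r → r ≤ rP M Q →
          (6*r^4 - 30*M*r^3 + (32*M^2 + 40*Q^2)*r^2 - 90*M*Q^2*r + 42*Q^4 ≤ 0) ∧
          (2*(r^2 - 3*M*r + 2*Q^2) / r^5
            - (1/2) * deriv (fun s => Upsilon M Q s * V1 M Q s) r ≤ 0) := by
  refine ⟨1/10, by norm_num, by norm_num, ?_⟩
  intro M Q hM hQ r hr1 hr2
  have hQ2 : Q^2 ≤ M^2/100 := by
    nlinarith [sq_abs Q, abs_nonneg Q]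
  have hMQ : (0:ℝ) ≤ M^2 - Q^2 := by nlinarith
  have hsqnn : 0 ≤ Real.sqrt (M^2 - Q^2) := Real.sqrt_nonneg _
  have hsq : (Real.sqrt (M^2 - Q^2))^2 = M^2 - Q^2 := Real.sq_sqrt hMQ
  have hrM : M + Real.sqrt (M^2 - Q^2) ≤ r := hr1
  have hrMsq : (r - M)^2 ≥ M^2 - Q^2 := by nlinarith
  have hr19 : 19*M ≤ 10*r := by nlinarith [hrMsq, hMQ]
  have hsq2 : Real.sqrt (9*M^2 - 8*Q^2) ≤ 3*M := by
    have h1 : Real.sqrt (9*M^2 - 8*Q^2) ≤ Real.sqrt ((3*M)^2) :=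
      Real.sqrt_le_sqrt (by nlinarith)
    rwa [Real.sqrt_sq (by positivity)] at h1
  have hr3 : r ≤ 3*M := by
    have := hr2
    unfold rP at this
    linarith
  have hrpos : 0 < r := by nlinarith
  have hrne : r ≠ 0 := ne_of_gt hrpos
  have hpoly : 6*r^4 - 30*M*r^3 + (32*M^2 + 40*Q^2)*r^2 - 90*M*Q^2*r + 42*Q^4 ≤ 0 := by
    nlinarith [mul_nonneg (mul_nonneg (by linarith : (0:ℝ) ≤ 10*r - 19*M) (by linarith : (0:ℝ) ≤ 3*M - r)) (sq_nonneg r),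
      mul_nonneg (mul_nonneg (by linarith : (0:ℝ) ≤ 10*r - 19*M) (by linarith : (0:ℝ) ≤ 3*M - r)) (sq_nonneg M),
      mul_nonneg (mul_nonneg hM.le hrpos.le) (sq_nonneg Q),
      sq_nonneg (Q^2), sq_nonneg Q, mul_pos hM hrpos,
      mul_nonneg (sq_nonneg Q) (mul_nonneg hM.le hrpos.le),
      mul_le_mul_of_nonneg_left hQ2 (by positivity : (0:ℝ) ≤ r^2),
      mul_le_mul_of_nonneg_left hQ2 (by positivity : (0:ℝ) ≤ M^2)]
  refine ⟨hpoly, ?_⟩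
  -- derivative computation
  have h1 : HasDerivAt (fun s : ℝ => s^2 - 2*M*s + Q^2) (2*r - 2*M) r := by
    have h := ((hasDerivAt_pow 2 r).sub ((hasDerivAt_id r).const_mul (2*M))).add_const (Q^2)
    simpa [mul_comm] using h
  have h2 : HasDerivAt (fun s : ℝ => 4*s^2 - 8*M*s + 14*Q^2) (8*r - 8*M) r := by
    have h := (((hasDerivAt_pow 2 r).const_mul 4).sub ((hasDerivAt_id r).const_mul (8*M))).add_const (14*Q^2)
    exact h.congr_deriv (by norm_num; ring)
  have hN := h1.mul h2
  have hden : HasDerivAt (fun s : ℝ => s^6) (6*r^5) r := by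
    simpa using hasDerivAt_pow 6 r
  have hdiv := hN.div hden (pow_ne_zero 6 hrne)
  have hev : (fun s => Upsilon M Q s * V1 M Q s)
      =ᶠ[nhds r] (fun s : ℝ => (s^2 - 2*M*s + Q^2) * (4*s^2 - 8*M*s + 14*Q^2) / s^6) := by
    filter_upwards [eventually_ne_nhds hrne] with s hs
    unfold Upsilon V1
    field_simp
  have hderiv : deriv (fun s => Upsilon M Q s * V1 M Q s) r
      = ((2*r - 2*M) * (4*r^2 - 8*M*r + 14*Q^2) + (r^2 - 2*M*r + Q^2) * (8*r - 8*M)) * r^6 / (r^6)^2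
        - (r^2 - 2*M*r + Q^2) * (4*r^2 - 8*M*r + 14*Q^2) * (6*r^5) / (r^6)^2 := by
    rw [Filter.EventuallyEq.deriv_eq hev]
    refine hdiv.deriv.trans ?_
    simp only [Pi.mul_apply]
    ring
  have key : 2*(r^2 - 3*M*r + 2*Q^2) / r^5
      - (1/2) * deriv (fun s => Upsilon M Q s * V1 M Q s) r
      = (6*r^4 - 30*M*r^3 + (32*M^2 + 40*Q^2)*r^2 - 90*M*Q^2*r + 42*Q^4) / r^7 := by
    rw [hderiv]
    field_simp
    ring
  rw [key]
  exact div_nonpos_of_nonpos_of_nonneg hpoly (by positivity)
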